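/- Fix integers c, d ≥ 1. Consider the quasi-lattice ordered group (ℤ, ℕ) with subgroups A = dℤ and B = cℤ and the group isomorphism φ : A → B given by φ(dm) = cm. Let ℤ* be the HNN extension of ℤ with respect to A, B, φ (so ℤ* has presentation ⟨x, t ∣ t⁻¹x^d t = x^c⟩, i.e. the Baumslag–Solitar group BS(c,d)), and let ℕ* be the submonoid of ℤ* generated by of(ℕ) and t. Then (ℤ*, ℕ*) is quasi-lattice ordered: ℕ* ∩ (ℕ*)⁻¹ = {e}, and every pair of elements of ℤ* with a common upper bound in ℕ* (for the order u ≤ v iff u⁻¹v ∈ ℕ*) has a least common upper bound in ℕ*. -/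

import Mathlib

/-- The left-invariant relation `x ≤ y ↔ x⁻¹ * y ∈ P` associated to a submonoid `P`. -/
def QLO.le {G : Type*} [Group G] (P : Submonoid G) (x y : G) : Prop := x⁻¹ * y ∈ P

/-- `w` is the least common upper bound of `x` and `y` lying in `P`. -/
def QLO.IsLub {G : Type*} [Group G] (P : Submonoid G) (x y w : G) : Prop :=
  w ∈ P ∧ QLO.le P x w ∧ QLO.le P y w ∧
    ∀ z ∈ P, QLO.le P x z → QLO.le P y z → QLO.le P w z

/-- `(G, P)` is a quasi-lattice ordered group. -/
def QLO.IsQLO {G : Type*} [Group G] (P : Submonoid G) : Prop :=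
  (∀ x : G, x ∈ P → x⁻¹ ∈ P → x = 1) ∧
    ∀ x y : G, (∃ z ∈ P, QLO.le P x z ∧ QLO.le P y z) → ∃ w : G, QLO.IsLub P x y w



namespace Stmt12

open HNNExtension HNNExtension.NormalWord Multiplicative Subgroup

structure Ctx where
  c : ℤ
  d : ℤ
  hc : 1 ≤ c
  hd : 1 ≤ d
  P : Submonoid (Multiplicative ℤ)
  hP : ∀ x : Multiplicative ℤ, x ∈ P ↔ 0 ≤ toAdd x
  A : Subgroup (Multiplicative ℤ)
  B : Subgroup (Multiplicative ℤ)
  hA : ∀ x : Multiplicative ℤ, x ∈ A ↔ ∃ m : ℤ, toAdd x = d * m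
  hB : ∀ x : Multiplicative ℤ, x ∈ B ↔ ∃ m : ℤ, toAdd x = c * m
  φ : A ≃* B
  hφ : ∀ (x : A) (m : ℤ), toAdd (x : Multiplicative ℤ) = d * m →
      toAdd ((φ x : B) : Multiplicative ℤ) = c * m

namespace Ctx

variable (X : Ctx)

abbrev M := Multiplicative ℤ

/-- The HNN extension. -/
abbrev HG := HNNExtension (Multiplicative ℤ) X.A X.B X.φ

/-- the modulus attached to a unit -/
def eu (u : ℤˣ) : ℤ := if u = 1 then X.d else X.c

lemma eu_one : X.eu 1 = X.d := rfl

lemma eu_negone : X.eu (-1) = X.c := by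
  simp [eu, Units.ext_iff]

lemma eu_pos (u : ℤˣ) : 0 < X.eu u := by
  rcases Int.units_eq_one_or u with rfl | rfl
  · simpa [eu_one] using lt_of_lt_of_le zero_lt_one X.hd
  · simpa [eu_negone] using lt_of_lt_of_le zero_lt_one X.hc

lemma eu_nonneg (u : ℤˣ) : 0 ≤ X.eu u := le_of_lt (X.eu_pos u)

lemma eu_ne_zero (u : ℤˣ) : X.eu u ≠ 0 := ne_of_gt (X.eu_pos u)

lemma eu_neg (u : ℤˣ) : X.eu (-u) = if u = 1 then X.c else X.d := by
  rcases Int.units_eq_one_or u with rfl | rfl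
  · simp [eu_negone]
  · simp only [neg_neg, eu_one]
    norm_num

lemma mem_toSubgroup (u : ℤˣ) (x : Multiplicative ℤ) :
    x ∈ toSubgroup X.A X.B u ↔ X.eu u ∣ toAdd x := by
  rcases Int.units_eq_one_or u with rfl | rfl
  · rw [toSubgroup_one, X.hA, eu_one]
    exact ⟨fun ⟨m, hm⟩ => ⟨m, hm⟩, fun ⟨m, hm⟩ => ⟨m, hm⟩⟩
  · rw [toSubgroup_neg_one, X.hB, eu_negone]
    exact ⟨fun ⟨m, hm⟩ => ⟨m, hm⟩, fun ⟨m, hm⟩ => ⟨m, hm⟩⟩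

/-- the transversal set: residues mod `eu u` -/
def tvset (u : ℤˣ) : Set (Multiplicative ℤ) :=
  {x | 0 ≤ toAdd x ∧ toAdd x < X.eu u}

lemma isCompl (u : ℤˣ) :
    IsComplement ((toSubgroup X.A X.B u : Subgroup (Multiplicative ℤ)) : Set (Multiplicative ℤ))
      (X.tvset u) := by
  constructor
  · rintro ⟨⟨a, ha⟩, ⟨s, hs⟩⟩ ⟨⟨a', ha'⟩, ⟨s', hs'⟩⟩ h
    simp only at h
    rw [SetLike.mem_coe, X.mem_toSubgroup] at ha ha'
    obtain ⟨hs0, hs1⟩ := hs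
    obtain ⟨hs0', hs1'⟩ := hs'
    have h' : toAdd a + toAdd s = toAdd a' + toAdd s' := by
      have := congrArg toAdd h
      simpa using this
    have hmod : toAdd s = toAdd s' := by
      obtain ⟨m, hm⟩ := ha
      obtain ⟨m', hm'⟩ := ha'
      have e1 : (toAdd a + toAdd s) % X.eu u = toAdd s := by
        rw [hm, add_comm, Int.add_mul_emod_self_left]
        exact Int.emod_eq_of_lt hs0 hs1
      have e2 : (toAdd a' + toAdd s') % X.eu u = toAdd s' := by
        rw [hm', add_comm, Int.add_mul_emod_self_left]
        exact Int.emod_eq_of_lt hs0' hs1'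
      rw [← e1, ← e2, h']
    have hsum : toAdd a = toAdd a' := by omega
    have ha2 : a = a' := toAdd.injective hsum
    have hs2 : s = s' := toAdd.injective hmod
    simp [Prod.ext_iff, Subtype.ext_iff, ha2, hs2]
  · intro g
    refine ⟨⟨⟨ofAdd (toAdd g - toAdd g % X.eu u), ?_⟩,
            ⟨ofAdd (toAdd g % X.eu u), ?_, ?_⟩⟩, ?_⟩
    · rw [SetLike.mem_coe, X.mem_toSubgroup]
      simp only [toAdd_ofAdd]
      have := Int.mul_ediv_add_emod (toAdd g) (X.eu u)
      refine ⟨toAdd g / X.eu u, by omega⟩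
    · simpa using Int.emod_nonneg _ (X.eu_ne_zero u)
    · simpa using Int.emod_lt_of_pos _ (X.eu_pos u)
    · simp only
      rw [← ofAdd_add]
      simp

/-- the transversal pair -/
def tv : TransversalPair (Multiplicative ℤ) X.A X.B :=
  ⟨X.tvset, X.isCompl⟩

lemma compl_equiv_eq (u : ℤˣ) (g : Multiplicative ℤ) :
    (X.tv.compl u).equiv g =
      (⟨ofAdd (X.eu u * (toAdd g / X.eu u)), by
          rw [SetLike.mem_coe, X.mem_toSubgroup]; simp⟩,
       ⟨ofAdd (toAdd g % X.eu u), by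
          refine ⟨by simpa using Int.emod_nonneg _ (X.eu_ne_zero u),
            by simpa using Int.emod_lt_of_pos _ (X.eu_pos u)⟩⟩) := by
  rw [Equiv.apply_eq_iff_eq_symm_apply, IsComplement.equiv_symm_apply]
  simp only
  rw [← ofAdd_add]
  rw [show X.eu u * (toAdd g / X.eu u) + toAdd g % X.eu u = toAdd g from
    Int.mul_ediv_add_emod _ _]
  simp

end Ctx
end Stmt12
-- appended to part1 (same namespaces)
namespace Stmt12
namespace Ctx

variable (X : Ctx)

open HNNExtension HNNExtension.NormalWord Multiplicative Subgroup

lemma mem_A_of (m : ℤ) : ofAdd (X.d * m) ∈ X.A := by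
  rw [X.hA]; exact ⟨m, by simp [mul_comm]⟩

lemma mem_B_of (m : ℤ) : ofAdd (X.c * m) ∈ X.B := by
  rw [X.hB]; exact ⟨m, by simp [mul_comm]⟩

lemma phi_apply (m : ℤ) (hmem : ofAdd (X.d * m) ∈ X.A) :
    ((X.φ ⟨ofAdd (X.d * m), hmem⟩ : X.B) : Multiplicative ℤ) = ofAdd (X.c * m) := by
  have := X.hφ ⟨ofAdd (X.d * m), hmem⟩ m (by simp [mul_comm])
  exact toAdd.injective (by simpa [mul_comm] using this)

lemma phisymm_apply (m : ℤ) (hmem : ofAdd (X.c * m) ∈ X.B) :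
    ((X.φ.symm ⟨ofAdd (X.c * m), hmem⟩ : X.A) : Multiplicative ℤ) = ofAdd (X.d * m) := by
  set y := X.φ.symm ⟨ofAdd (X.c * m), hmem⟩ with hy
  obtain ⟨m', hm'⟩ := (X.hA _).1 y.2
  have h1 : toAdd ((X.φ y : X.B) : Multiplicative ℤ) = X.c * m' := X.hφ y m' hm'
  have h2 : X.φ y = ⟨ofAdd (X.c * m), hmem⟩ := by rw [hy]; simp
  rw [h2] at h1
  simp only [toAdd_ofAdd] at h1
  have hc0 : X.c ≠ 0 := by have := X.hc; omega
  have : m' = m := by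
    have := h1.symm
    exact mul_left_cancel₀ hc0 this
  subst this
  exact toAdd.injective (by simpa [mul_comm] using hm')

/-- The unit-indexed "phi": `toSubgroupEquiv` computation. -/
lemma tse_apply (u : ℤˣ) (m : ℤ) (hmem : ofAdd (X.eu u * m) ∈ toSubgroup X.A X.B u) :
    ((toSubgroupEquiv X.φ u ⟨ofAdd (X.eu u * m), hmem⟩ : toSubgroup X.A X.B (-u)) :
      Multiplicative ℤ) = ofAdd (X.eu (-u) * m) := by
  rcases Int.units_eq_one_or u with rfl | rfl
  · rw [show X.eu (-1) = X.c from X.eu_negone]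
    exact X.phi_apply m hmem
  · rw [show X.eu (- -1) = X.d by rw [neg_neg]; rfl]
    exact X.phisymm_apply m hmem

/-- normal form -/
noncomputable def nf (g : X.HG) : NormalWord X.tv := g • NormalWord.empty

lemma nf_mul_smul (a b : X.HG) : X.nf (a * b) = a • X.nf b := mul_smul a b _

lemma prod_nf (g : X.HG) : (X.nf g).prod X.φ = g := by
  rw [nf, prod_smul, prod_empty, mul_one]

lemma nf_prod (w : NormalWord X.tv) : X.nf (w.prod X.φ) = w := prod_smul_empty _ _

lemma nf_one : X.nf 1 = NormalWord.empty := one_smul _ _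

/-- all units in the word are `+1` -/
def AllP (w : NormalWord X.tv) : Prop := ∀ p ∈ w.toList, p.1 = (1 : ℤˣ)

/-- positive normal word -/
def Pos (w : NormalWord X.tv) : Prop := 0 ≤ toAdd w.head ∧ X.AllP w

lemma of_smul_head (g : Multiplicative ℤ) (w : NormalWord X.tv) :
    ((of g : X.HG) • w).head = g * w.head := by
  rw [of_smul_eq_smul]; rfl

lemma of_smul_toList (g : Multiplicative ℤ) (w : NormalWord X.tv) :
    ((of g : X.HG) • w).toList = w.toList := by
  rw [of_smul_eq_smul]; rfl

lemma not_cancels_of_allP (w : NormalWord X.tv)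
    (h : ∀ p ∈ w.toList.head?, (p : ℤˣ × Multiplicative ℤ).1 ≠ (-1 : ℤˣ)) :
    ¬ Cancels 1 w := by
  rintro ⟨h1, h2⟩
  rw [Option.map_eq_some_iff] at h2
  obtain ⟨p, hp, hp1⟩ := h2
  exact h (p) hp (by simpa using hp1)

lemma t_smul_eq (w : NormalWord X.tv)
    (h : ∀ p ∈ w.toList.head?, (p : ℤˣ × Multiplicative ℤ).1 ≠ (-1 : ℤˣ)) :
    ((t : X.HG) • w).head = ofAdd (X.eu (-1) * (toAdd w.head / X.eu 1)) ∧
    ((t : X.HG) • w).toList = (1, ofAdd (toAdd w.head % X.eu 1)) :: w.toList := by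
  rw [t_smul_eq_unitsSMul, unitsSMul, dif_neg (X.not_cancels_of_allP w h)]
  have hceq := X.compl_equiv_eq 1 w.head
  constructor
  · show ((unitsSMulGroup X.φ X.tv 1 w.head).1 : Multiplicative ℤ) = _
    rw [unitsSMulGroup]
    simp only
    rw [hceq]
    exact X.tse_apply 1 (toAdd w.head / X.eu 1) _
  · show (1, _) :: w.toList = _
    congr 2
    rw [unitsSMulGroup_snd]
    show (((X.tv.compl 1).equiv w.head).2 : Multiplicative ℤ) * w.head⁻¹ * w.head = _
    rw [hceq]
    simp

lemma t_smul_head (w : NormalWord X.tv)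
    (h : ∀ p ∈ w.toList.head?, (p : ℤˣ × Multiplicative ℤ).1 ≠ (-1 : ℤˣ)) :
    toAdd ((t : X.HG) • w).head = X.c * (toAdd w.head / X.d) := by
  rw [(X.t_smul_eq w h).1, X.eu_negone, eu_one]; simp [mul_comm]

lemma t_smul_toList (w : NormalWord X.tv)
    (h : ∀ p ∈ w.toList.head?, (p : ℤˣ × Multiplicative ℤ).1 ≠ (-1 : ℤˣ)) :
    ((t : X.HG) • w).toList = (1, ofAdd (toAdd w.head % X.d)) :: w.toList := by
  rw [(X.t_smul_eq w h).2, eu_one]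

lemma allP_head? (w : NormalWord X.tv) (h : X.AllP w) :
    ∀ p ∈ w.toList.head?, (p : ℤˣ × Multiplicative ℤ).1 ≠ (-1 : ℤˣ) := by
  intro p hp
  have := h p (by
    cases hl : w.toList with
    | nil => rw [hl] at hp; simp at hp
    | cons a l => rw [hl] at hp; simp at hp; subst hp; simp)
  rw [this]
  decide

end Ctx
end Stmt12
namespace Stmt12
namespace Ctx

variable (X : Ctx)

open HNNExtension HNNExtension.NormalWord Multiplicative Subgroup

/-- the positive cone submonoid -/
def Pst : Submonoid X.HG :=
  Submonoid.closure ((HNNExtension.of '' (X.P : Set (Multiplicative ℤ))) ∪ {HNNExtension.t})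

lemma of_mem_Pst (y : Multiplicative ℤ) (hy : 0 ≤ toAdd y) : (of y : X.HG) ∈ X.Pst :=
  Submonoid.subset_closure (Or.inl ⟨y, (X.hP y).2 hy, rfl⟩)

lemma t_mem_Pst : (t : X.HG) ∈ X.Pst :=
  Submonoid.subset_closure (Or.inr rfl)

lemma pos_smul_pos {g : X.HG} (hg : g ∈ X.Pst) :
    ∀ w : NormalWord X.tv, X.Pos w → X.Pos (g • w) := by
  refine Submonoid.closure_induction ?_ ?_ ?_ hg
  · rintro x (⟨y, hy, rfl⟩ | rfl)
    · intro w hw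
      refine ⟨?_, ?_⟩
      · rw [X.of_smul_head]
        simp only [toAdd_mul]
        have := (X.hP y).1 hy
        have := hw.1
        omega
      · intro p hp
        rw [X.of_smul_toList] at hp
        exact hw.2 p hp
    · intro w hw
      have hnc := X.allP_head? w hw.2
      refine ⟨?_, ?_⟩
      · rw [X.t_smul_head w hnc]
        have h1 : 0 ≤ toAdd w.head / X.d := Int.ediv_nonneg hw.1 (by have := X.hd; omega)
        have := X.hc
        positivity
      · intro p hp
        rw [X.t_smul_toList w hnc] at hp
        rcases List.mem_cons.1 hp with rfl | hp
        · rfl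
        · exact hw.2 p hp
  · intro w hw
    rw [one_smul]; exact hw
  · intro a b _ _ ha hb w hw
    rw [mul_smul]
    exact ha _ (hb _ hw)

lemma pos_empty : X.Pos NormalWord.empty := by
  constructor
  · simp [NormalWord.empty]
  · intro p hp; simp [NormalWord.empty] at hp

/-- `tprod`: product of a list of letters -/
noncomputable def tprod (l : List (ℤˣ × Multiplicative ℤ)) : X.HG :=
  l.foldr (fun p acc => (t : X.HG) ^ ((p.1 : ℤˣ) : ℤ) * HNNExtension.of p.2 * acc) 1

@[simp] lemma tprod_nil : X.tprod [] = 1 := rfl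

@[simp] lemma tprod_cons (u : ℤˣ) (g : Multiplicative ℤ) (l : List (ℤˣ × Multiplicative ℤ)) :
    X.tprod ((u, g) :: l) = (t : X.HG) ^ (u : ℤ) * HNNExtension.of g * X.tprod l := rfl

lemma tprod_eq_listprod (l : List (ℤˣ × Multiplicative ℤ)) :
    (l.map fun x => ((t : X.HG) ^ (x.1 : ℤ) * HNNExtension.of x.2)).prod = X.tprod l := by
  induction l with
  | nil => rfl
  | cons a l ih =>
    cases a with
    | mk u g => rw [List.map_cons, List.prod_cons, ih, X.tprod_cons, mul_assoc]

lemma rprod_eq (w : ReducedWord (Multiplicative ℤ) X.A X.B) :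
    w.prod X.φ = of w.head * X.tprod w.toList := by
  rw [ReducedWord.prod, X.tprod_eq_listprod]

lemma nprod_eq (w : NormalWord X.tv) :
    w.prod X.φ = of w.head * X.tprod w.toList := X.rprod_eq _

lemma tprod_mem (l : List (ℤˣ × Multiplicative ℤ)) (h1 : ∀ p ∈ l, p.1 = (1 : ℤˣ))
    (h2 : ∀ p ∈ l, 0 ≤ toAdd p.2) : X.tprod l ∈ X.Pst := by
  induction l with
  | nil => exact Submonoid.one_mem _
  | cons a l ih =>
    cases a with
    | mk u g =>
      rw [X.tprod_cons]
      have hu : u = 1 := h1 (u, g) List.mem_cons_self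
      subst hu
      refine Submonoid.mul_mem _ (Submonoid.mul_mem _ ?_ ?_) ?_
      · rw [show ((1:ℤˣ) : ℤ) = (1:ℤ) from rfl, zpow_one]
        exact X.t_mem_Pst
      · exact X.of_mem_Pst g (h2 (1, g) List.mem_cons_self)
      · exact ih (fun p hp => h1 p (List.mem_cons_of_mem _ hp))
          (fun p hp => h2 p (List.mem_cons_of_mem _ hp))

lemma mem_tvset_nonneg {u : ℤˣ} {x : Multiplicative ℤ} (h : x ∈ X.tv.set u) :
    0 ≤ toAdd x := h.1

/-- positivity implies membership -/
lemma pos_prod_mem (w : NormalWord X.tv) (hw : X.Pos w) : w.prod X.φ ∈ X.Pst := by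
  rw [X.nprod_eq]
  refine Submonoid.mul_mem _ (X.of_mem_Pst _ hw.1) ?_
  exact X.tprod_mem _ hw.2 (fun p hp =>
    X.mem_tvset_nonneg (w.mem_set p.1 p.2 (by cases p; exact hp)))

lemma mem_Pst_iff (g : X.HG) : g ∈ X.Pst ↔ X.Pos (X.nf g) := by
  constructor
  · intro hg
    exact X.pos_smul_pos hg _ X.pos_empty
  · intro hg
    rw [← X.prod_nf g]
    exact X.pos_prod_mem _ hg

end Ctx
end Stmt12
namespace Stmt12

open HNNExtension HNNExtension.NormalWord Multiplicative Subgroup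

/-- reduced word data for `(of h * tprod L)⁻¹ * (of k * tprod T)` -/
def Fc : Multiplicative ℤ → List (ℤˣ × Multiplicative ℤ) → Multiplicative ℤ →
    List (ℤˣ × Multiplicative ℤ) → Multiplicative ℤ × List (ℤˣ × Multiplicative ℤ)
  | h, [], k, T => (h⁻¹ * k, T)
  | h, (u, g) :: L, k, T => Fc g L 1 ((-u, h⁻¹ * k) :: T)

lemma units_ne_neg_self (u : ℤˣ) : u ≠ -u := by
  rcases Int.units_eq_one_or u with rfl | rfl <;> decide

lemma units_eq_or_eq_neg (u v : ℤˣ) : u = v ∨ u = -v := by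
  rcases Int.units_eq_one_or u with rfl | rfl <;>
    rcases Int.units_eq_one_or v with rfl | rfl <;> simp <;> decide

namespace Ctx

variable (X : Ctx)

lemma Fc_prod : ∀ (L : List (ℤˣ × Multiplicative ℤ)) (h k : Multiplicative ℤ)
    (T : List (ℤˣ × Multiplicative ℤ)),
    HNNExtension.of (Fc h L k T).1 * X.tprod (Fc h L k T).2 =
      (HNNExtension.of h * X.tprod L)⁻¹ * (HNNExtension.of k * X.tprod T) := by
  intro L
  induction L with
  | nil =>
    intro h k T
    rw [Fc]
    simp only [tprod_nil, mul_one, map_mul, map_inv]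
    rw [mul_assoc]
  | cons a L ih =>
    intro h k T
    cases a with
    | mk u g =>
      rw [Fc, ih]
      rw [X.tprod_cons, X.tprod_cons]
      have hneg : ((-u : ℤˣ) : ℤ) = -((u : ℤˣ) : ℤ) := by simp
      rw [hneg, zpow_neg]
      simp only [map_mul, map_inv, map_one, mul_inv_rev, one_mul]
      group

lemma Fc_units : ∀ (L : List (ℤˣ × Multiplicative ℤ)) (h k : Multiplicative ℤ)
    (T : List (ℤˣ × Multiplicative ℤ)),
    (Fc h L k T).2.map Prod.fst =
      (L.map (fun p => -p.1)).reverse ++ T.map Prod.fst := by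
  intro L
  induction L with
  | nil => intro h k T; rw [Fc]; simp
  | cons a L ih =>
    intro h k T
    cases a with
    | mk u g =>
      rw [Fc, ih]
      simp [List.map_cons, List.reverse_cons, List.append_assoc]

/-- the chain condition -/
abbrev Cd (a b : ℤˣ × Multiplicative ℤ) : Prop :=
  a.2 ∈ toSubgroup X.A X.B a.1 → a.1 = b.1

lemma Fc_chain : ∀ (L : List (ℤˣ × Multiplicative ℤ)) (h k : Multiplicative ℤ)
    (T : List (ℤˣ × Multiplicative ℤ)),
    L.Chain' X.Cd → T.Chain' X.Cd →
    (∀ (u : ℤˣ) (g : Multiplicative ℤ) L', L = (u, g) :: L' →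
      ∀ b ∈ T.head?, (h⁻¹ * k ∈ toSubgroup X.A X.B (-u) → -u = (b : ℤˣ × Multiplicative ℤ).1)) →
    (Fc h L k T).2.Chain' X.Cd := by
  intro L
  induction L with
  | nil => intro h k T _ hT _; rw [Fc]; exact hT
  | cons a L ih =>
    intro h k T hL hT hjunc
    cases a with
    | mk u g =>
      rw [Fc]
      refine ih g 1 ((-u, h⁻¹ * k) :: T) ((List.isChain_cons.1 hL).2) ?_ ?_
      · refine List.isChain_cons.2 ⟨?_, hT⟩
        intro b hb
        exact hjunc u g L rfl b hb
      · rintro u' g' L'' rfl b hb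
        simp only [List.head?_cons, Option.mem_def, Option.some.injEq] at hb
        subst hb
        intro hmem
        simp only [mul_one] at hmem
        rw [inv_mem_iff] at hmem
        rcases units_eq_or_eq_neg u' u with rfl | rfl
        · rfl
        · exfalso
          rw [neg_neg] at hmem
          have := (List.isChain_cons.1 hL).1 (-u, g') (by simp) hmem
          simp only at this
          exact units_ne_neg_self u this

/-- The key Britton-style lemma: if `z` and `g⁻¹z` are both positive and the
junction condition holds, then all the units of `nf g` are `-1`. -/
lemma bkey_units (g z : X.HG) (hz : z ∈ X.Pst) (hgz : g⁻¹ * z ∈ X.Pst)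
    (hjunc : ∀ (u : ℤˣ) (gg : Multiplicative ℤ) L', (X.nf g).toList = (u, gg) :: L' →
      ∀ b ∈ (X.nf z).toList.head?,
        ((X.nf g).head⁻¹ * (X.nf z).head ∈ toSubgroup X.A X.B (-u) →
          -u = (b : ℤˣ × Multiplicative ℤ).1)) :
    ∀ p ∈ (X.nf g).toList, (p : ℤˣ × Multiplicative ℤ).1 = (-1 : ℤˣ) := by
  set wg := X.nf g with hwg
  set wz := X.nf z with hwz
  have hchain : ((Fc wg.head wg.toList wz.head wz.toList).2).Chain' X.Cd :=
    X.Fc_chain wg.toList wg.head wz.head wz.toList wg.chain wz.chain hjunc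
  set J : ReducedWord (Multiplicative ℤ) X.A X.B :=
    ⟨(Fc wg.head wg.toList wz.head wz.toList).1,
     (Fc wg.head wg.toList wz.head wz.toList).2, hchain⟩ with hJ
  have hJprod : J.prod X.φ = g⁻¹ * z := by
    rw [X.rprod_eq]
    show HNNExtension.of (Fc wg.head wg.toList wz.head wz.toList).1 *
      X.tprod (Fc wg.head wg.toList wz.head wz.toList).2 = _
    rw [X.Fc_prod]
    rw [← X.nprod_eq, ← X.nprod_eq, hwg, hwz, X.prod_nf, X.prod_nf]
  have hpos := (X.mem_Pst_iff _).1 hgz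
  have hprod2 : J.prod X.φ = (X.nf (g⁻¹ * z)).prod X.φ := by
    rw [hJprod, X.prod_nf]
  have hfst := (ReducedWord.map_fst_eq_and_of_prod_eq X.φ hprod2).1
  have hunits : ∀ q ∈ J.toList.map Prod.fst, q = (1 : ℤˣ) := by
    rw [hfst]
    intro q hq
    rw [List.mem_map] at hq
    obtain ⟨p, hp, rfl⟩ := hq
    exact hpos.2 p hp
  intro p hp
  have hmem : -p.1 ∈ J.toList.map Prod.fst := by
    show -p.1 ∈ (Fc wg.head wg.toList wz.head wz.toList).2.map Prod.fst
    rw [Fc_units]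
    refine List.mem_append_left _ ?_
    rw [List.mem_reverse, List.mem_map]
    exact ⟨p, hp, rfl⟩
  have := hunits _ hmem
  rw [neg_eq_iff_eq_neg] at this
  rw [this]

lemma bkey_neg (g z : X.HG) (hz : z ∈ X.Pst) (hgz : g⁻¹ * z ∈ X.Pst)
    (x0 : Multiplicative ℤ) (L0 : List (ℤˣ × Multiplicative ℤ))
    (hu : (X.nf g).toList = ((-1 : ℤˣ), x0) :: L0) :
    ∀ p ∈ (X.nf g).toList, (p : ℤˣ × Multiplicative ℤ).1 = (-1 : ℤˣ) := by
  refine X.bkey_units g z hz hgz ?_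
  intro u gg L' hL b hb _
  have hposz := (X.mem_Pst_iff _).1 hz
  have hb1 : (b : ℤˣ × Multiplicative ℤ).1 = 1 := by
    refine hposz.2 b ?_
    exact List.mem_of_mem_head? hb
  rw [hL] at hu
  have : u = (-1 : ℤˣ) := by
    have := congrArg (fun l => List.head? l) hu
    simpa using (congrArg (fun o => Option.map Prod.fst o) this)
  rw [this, hb1, neg_neg]

lemma bkey_pos (g z : X.HG) (hz : z ∈ X.Pst) (hgz : g⁻¹ * z ∈ X.Pst)
    (x0 : Multiplicative ℤ) (L0 : List (ℤˣ × Multiplicative ℤ))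
    (hu : (X.nf g).toList = ((1 : ℤˣ), x0) :: L0) :
    (X.nf z).toList ≠ [] ∧
      X.c ∣ (toAdd (X.nf z).head - toAdd (X.nf g).head) := by
  by_cases hjunc : ∀ (u : ℤˣ) (gg : Multiplicative ℤ) L', (X.nf g).toList = (u, gg) :: L' →
      ∀ b ∈ (X.nf z).toList.head?,
        ((X.nf g).head⁻¹ * (X.nf z).head ∈ toSubgroup X.A X.B (-u) →
          -u = (b : ℤˣ × Multiplicative ℤ).1)
  · exfalso
    have := X.bkey_units g z hz hgz hjunc ((1 : ℤˣ), x0) (by rw [hu]; simp)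
    simp only at this
    exact absurd this (by decide)
  · push_neg at hjunc
    obtain ⟨u, gg, L', hL, b, hb, hmem, hne⟩ := hjunc
    have hu' : u = 1 := by
      rw [hL] at hu
      have := congrArg (fun l => Option.map Prod.fst l.head?) hu
      simpa using this
    subst hu'
    constructor
    · intro hnil
      rw [hnil] at hb
      simp at hb
    · rw [hL] at hu
      have hmem' := hmem
      rw [show (-(1:ℤˣ)) = (-1 : ℤˣ) from rfl, X.mem_toSubgroup, X.eu_negone] at hmem'
      simp only [toAdd_mul, toAdd_inv] at hmem'
      rwa [add_comm, ← sub_eq_add_neg] at hmem'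

end Ctx
end Stmt12
namespace Stmt12

open HNNExtension HNNExtension.NormalWord Multiplicative Subgroup

/-- iterated carry function for the all-negative case -/
def negF (c d : ℤ) : ℤ → List ℤ → ℤ
  | v, [] => v
  | v, r :: rs => negF c d (c * (v / d) - r) rs

namespace Ctx

variable (X : Ctx)

/-- `Erev [r₁, …, rₙ] = x^{-rₙ} t ⋯ x^{-r₁} t` -/
noncomputable def Erev (l : List ℤ) : X.HG :=
  l.foldr (fun r acc => acc * (HNNExtension.of (ofAdd r))⁻¹ * t) 1

@[simp] lemma Erev_nil : X.Erev [] = 1 := rfl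

@[simp] lemma Erev_cons (r : ℤ) (l : List ℤ) :
    X.Erev (r :: l) = X.Erev l * (HNNExtension.of (ofAdd r))⁻¹ * t := rfl

lemma allP_of_smul (g : Multiplicative ℤ) (w : NormalWord X.tv) (h : X.AllP w) :
    X.AllP ((of g : X.HG) • w) := by
  intro p hp; rw [X.of_smul_toList] at hp; exact h p hp

lemma allP_t_smul (w : NormalWord X.tv) (h : X.AllP w) :
    X.AllP ((t : X.HG) • w) := by
  intro p hp
  rw [X.t_smul_toList w (X.allP_head? w h)] at hp
  rcases List.mem_cons.1 hp with rfl | hp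
  · rfl
  · exact h p hp

lemma Erev_smul : ∀ (rs : List ℤ) (w : NormalWord X.tv), X.AllP w →
    X.AllP (X.Erev rs • w) ∧
      toAdd (X.Erev rs • w).head = negF X.c X.d (toAdd w.head) rs := by
  intro rs
  induction rs with
  | nil => intro w hw; rw [Erev_nil, one_smul]; exact ⟨hw, rfl⟩
  | cons r rs ih =>
    intro w hw
    have hsp : X.Erev (r :: rs) • w
        = X.Erev rs • ((of (ofAdd r) : X.HG)⁻¹ • ((t : X.HG) • w)) := by
      rw [Erev_cons, mul_smul, mul_smul]
    have h1 : X.AllP ((t : X.HG) • w) := X.allP_t_smul w hw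
    have h2 : X.AllP ((of (ofAdd r) : X.HG)⁻¹ • ((t : X.HG) • w)) := by
      rw [← map_inv]
      exact X.allP_of_smul _ _ h1
    have hhead : toAdd ((of (ofAdd r) : X.HG)⁻¹ • ((t : X.HG) • w)).head
        = X.c * (toAdd w.head / X.d) - r := by
      rw [← map_inv, X.of_smul_head]
      rw [toAdd_mul]
      rw [X.t_smul_head w (X.allP_head? w hw)]
      simp [sub_eq_add_neg, add_comm]
    obtain ⟨ha, hb⟩ := ih _ h2
    rw [hsp]
    refine ⟨ha, ?_⟩
    rw [hb, hhead]
    rfl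

lemma tprod_allneg : ∀ (L : List (ℤˣ × Multiplicative ℤ)),
    (∀ p ∈ L, (p : ℤˣ × Multiplicative ℤ).1 = (-1 : ℤˣ)) →
    X.tprod L = (X.Erev (L.map fun p => toAdd p.2))⁻¹ := by
  intro L
  induction L with
  | nil => intro _; simp
  | cons a L ih =>
    intro hall
    cases a with
    | mk u g =>
      have hu : u = -1 := hall (u, g) List.mem_cons_self
      subst hu
      rw [X.tprod_cons, ih (fun p hp => hall p (List.mem_cons_of_mem _ hp))]
      rw [List.map_cons, Erev_cons]
      simp only [mul_inv_rev, inv_inv]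
      have : ((-1 : ℤˣ) : ℤ) = (-1 : ℤ) := rfl
      rw [this, zpow_neg, zpow_one]
      rw [show (ofAdd (toAdd g)) = g from ofAdd_toAdd g]
      group

/-- criterion for an element with all-negative normal form to be below `z` -/
lemma neg_crit (g : X.HG) (hall : ∀ p ∈ (X.nf g).toList, (p : ℤˣ × Multiplicative ℤ).1 = (-1 : ℤˣ))
    (z : X.HG) (hz : X.AllP (X.nf z)) :
    (g⁻¹ * z ∈ X.Pst ↔
      0 ≤ negF X.c X.d (toAdd (X.nf z).head - toAdd (X.nf g).head)
        ((X.nf g).toList.map fun p => toAdd p.2)) := by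
  have hg : g = of (X.nf g).head * (X.Erev ((X.nf g).toList.map fun p => toAdd p.2))⁻¹ := by
    conv_lhs => rw [← X.prod_nf g]
    rw [X.nprod_eq, X.tprod_allneg _ hall]
  set rs := (X.nf g).toList.map fun p => toAdd p.2
  have hinv : g⁻¹ = X.Erev rs * (of (X.nf g).head)⁻¹ := by
    conv_lhs => rw [hg]
    rw [mul_inv_rev, inv_inv]
  have hw : X.nf (g⁻¹ * z) = X.Erev rs • ((of ((X.nf g).head)⁻¹ : X.HG) • X.nf z) := by
    rw [X.nf_mul_smul, hinv, mul_smul, map_inv]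
  have hinner : X.AllP ((of ((X.nf g).head)⁻¹ : X.HG) • X.nf z) :=
    X.allP_of_smul _ _ hz
  have hinnerhead : toAdd ((of ((X.nf g).head)⁻¹ : X.HG) • X.nf z).head
      = toAdd (X.nf z).head - toAdd (X.nf g).head := by
    rw [X.of_smul_head]
    simp [sub_eq_add_neg, add_comm]
  obtain ⟨ha, hb⟩ := X.Erev_smul rs _ hinner
  rw [X.mem_Pst_iff, Pos, hw]
  rw [hb, hinnerhead]
  constructor
  · intro h; exact h.1
  · intro h; exact ⟨h, ha⟩

/-- split a normal word along its first letter -/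
lemma split_word (w : NormalWord X.tv) (u : ℤˣ) (x : Multiplicative ℤ)
    (L : List (ℤˣ × Multiplicative ℤ)) (hw : w.toList = (u, x) :: L) :
    ∃ w' : NormalWord X.tv, w'.head = x ∧ w'.toList = L ∧
      w.prod X.φ = of w.head * ((t : X.HG) ^ (u : ℤ) * w'.prod X.φ) := by
  have hchain := w.chain
  rw [hw] at hchain
  refine ⟨⟨⟨x, L, (List.isChain_cons.1 hchain).2⟩, ?_⟩, rfl, rfl, ?_⟩
  · intro v y hy
    exact w.mem_set v y (by rw [hw]; exact List.mem_cons_of_mem _ hy)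
  · have h2 : X.tprod w.toList = (t : X.HG) ^ (u : ℤ) * of x * X.tprod L := by
      rw [hw, X.tprod_cons]
    rw [X.nprod_eq, h2, X.nprod_eq]
    show _ = of w.head * (t ^ (u:ℤ) * (of x * X.tprod L))
    rw [mul_assoc]

/-- the set of upper bounds of `g` in `Pst` -/
def Ub (g : X.HG) : Set X.HG := {z | z ∈ X.Pst ∧ g⁻¹ * z ∈ X.Pst}

lemma Ub_mul_right {g s : X.HG} (hs : s ∈ X.Ub g) {p : X.HG} (hp : p ∈ X.Pst) :
    s * p ∈ X.Ub g := by
  refine ⟨Submonoid.mul_mem _ hs.1 hp, ?_⟩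
  rw [← mul_assoc]
  exact Submonoid.mul_mem _ hs.2 hp

lemma conj_pow (m : ℤ) :
    (t : X.HG)⁻¹ * of (ofAdd (X.c * m)) * t = of (ofAdd (X.d * m)) := by
  have hmem : ofAdd (X.c * m) ∈ X.B := X.mem_B_of m
  have := equiv_symm_eq_conj (φ := X.φ) ⟨ofAdd (X.c * m), hmem⟩
  rw [X.phisymm_apply m hmem] at this
  rw [this]

lemma nf_of_head (y : Multiplicative ℤ) : (X.nf (of y : X.HG)).head = y := by
  rw [nf, of_smul_eq_smul]
  show y * NormalWord.empty.head = y
  simp [NormalWord.empty]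

lemma nf_of_toList (y : Multiplicative ℤ) : (X.nf (of y : X.HG)).toList = [] := by
  rw [nf, of_smul_eq_smul]
  rfl

end Ctx
end Stmt12
namespace Stmt12
namespace Ctx

open HNNExtension HNNExtension.NormalWord Multiplicative Subgroup

variable (X : Ctx)

lemma nf_head_nonneg {z : X.HG} (hz : z ∈ X.Pst) : 0 ≤ toAdd (X.nf z).head :=
  ((X.mem_Pst_iff z).1 hz).1

lemma nf_allP {z : X.HG} (hz : z ∈ X.Pst) : X.AllP (X.nf z) :=
  ((X.mem_Pst_iff z).1 hz).2

lemma of_inv_mul_mem {y : Multiplicative ℤ} {z : X.HG} (hz : z ∈ X.Pst)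
    (hyk : toAdd y ≤ toAdd (X.nf z).head) : (of y : X.HG)⁻¹ * z ∈ X.Pst := by
  rw [X.mem_Pst_iff, X.nf_mul_smul, ← map_inv]
  constructor
  · rw [X.of_smul_head, toAdd_mul, toAdd_inv]
    have := X.nf_head_nonneg hz
    omega
  · exact X.allP_of_smul _ _ (X.nf_allP hz)

lemma of_inv_mul_head {y : Multiplicative ℤ} {z : X.HG} :
    toAdd (X.nf ((of y : X.HG)⁻¹ * z)).head = toAdd (X.nf z).head - toAdd y := by
  rw [X.nf_mul_smul, ← map_inv, X.of_smul_head, toAdd_mul, toAdd_inv]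
  omega

/-- the base case of the main induction : `nf g` has no letters -/
lemma base_case (g : X.HG) (hL : (X.nf g).toList = []) :
    ∃ s, s ∈ X.Ub g ∧ X.Ub g = {w | ∃ p ∈ X.Pst, w = s * p} := by
  set h := toAdd (X.nf g).head with hh
  have hg : g = of (X.nf g).head := by
    conv_lhs => rw [← X.prod_nf g]
    rw [X.nprod_eq]
    have : X.tprod (X.nf g).toList = 1 := by rw [hL]; rfl
    rw [this, mul_one]
  set s : X.HG := of (ofAdd (max h 0)) with hs
  have hsUb : s ∈ X.Ub g := by
    refine ⟨X.of_mem_Pst _ (by rw [toAdd_ofAdd]; exact le_max_right _ _), ?_⟩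
    rw [hg, ← map_inv, ← map_mul]
    refine X.of_mem_Pst _ ?_
    simp only [toAdd_mul, toAdd_inv, toAdd_ofAdd]
    omega
  refine ⟨s, hsUb, ?_⟩
  ext z
  constructor
  · rintro ⟨hz1, hz2⟩
    have hk0 : 0 ≤ toAdd (X.nf z).head := X.nf_head_nonneg hz1
    have hkh : h ≤ toAdd (X.nf z).head := by
      rw [hg] at hz2
      have := X.nf_head_nonneg hz2
      rw [X.of_inv_mul_head] at this
      omega
    refine ⟨s⁻¹ * z, ?_, by group⟩
    rw [hs]
    refine X.of_inv_mul_mem hz1 ?_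
    simp only [toAdd_ofAdd]
    omega
  · rintro ⟨p, hp, rfl⟩
    exact X.Ub_mul_right hsUb hp

/-- the all-negative-letters case -/
lemma neg_case (g : X.HG)
    (hall : ∀ p ∈ (X.nf g).toList, (p : ℤˣ × Multiplicative ℤ).1 = (-1 : ℤˣ))
    (hne : (X.Ub g).Nonempty) :
    ∃ s, s ∈ X.Ub g ∧ X.Ub g = {w | ∃ p ∈ X.Pst, w = s * p} := by
  classical
  set h := toAdd (X.nf g).head with hh
  set rs := (X.nf g).toList.map (fun p => toAdd p.2) with hrs
  have crit : ∀ z ∈ X.Pst, (g⁻¹ * z ∈ X.Pst ↔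
      0 ≤ negF X.c X.d (toAdd (X.nf z).head - h) rs) := fun z hz =>
    X.neg_crit g hall z (X.nf_allP hz)
  obtain ⟨z₀, hz₀⟩ := hne
  have hK : ∃ k : ℤ, 0 ≤ k ∧ 0 ≤ negF X.c X.d (k - h) rs :=
    ⟨toAdd (X.nf z₀).head, X.nf_head_nonneg hz₀.1, (crit z₀ hz₀.1).1 hz₀.2⟩
  obtain ⟨k₀, hk₀, hmin⟩ := Int.exists_least_of_bdd
    (P := fun k => 0 ≤ k ∧ 0 ≤ negF X.c X.d (k - h) rs)
    ⟨0, fun z hz => hz.1⟩ hK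
  set s : X.HG := of (ofAdd k₀) with hs
  have hsPst : s ∈ X.Pst := X.of_mem_Pst _ (by simpa using hk₀.1)
  have hsUb : s ∈ X.Ub g := by
    refine ⟨hsPst, ?_⟩
    rw [crit s hsPst, X.nf_of_head]
    simpa using hk₀.2
  refine ⟨s, hsUb, ?_⟩
  ext z
  constructor
  · rintro ⟨hz1, hz2⟩
    have hzk := hmin (toAdd (X.nf z).head) ⟨X.nf_head_nonneg hz1, (crit z hz1).1 hz2⟩
    refine ⟨s⁻¹ * z, ?_, by group⟩
    exact X.of_inv_mul_mem hz1 (by simpa using hzk)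
  · rintro ⟨p, hp, rfl⟩
    exact X.Ub_mul_right hsUb hp

end Ctx
end Stmt12
namespace Stmt12
namespace Ctx

open HNNExtension HNNExtension.NormalWord Multiplicative Subgroup

variable (X : Ctx)

/-- shifted tail element -/
noncomputable def Gj (gt : X.HG) (h k : ℤ) : X.HG :=
  (HNNExtension.of (ofAdd (X.d * ((k - h) / X.c))) : X.HG)⁻¹ * gt

lemma Gj_inv (gt : X.HG) (h k : ℤ) :
    (X.Gj gt h k)⁻¹ = gt⁻¹ * HNNExtension.of (ofAdd (X.d * ((k - h) / X.c))) := by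
  rw [Gj, mul_inv_rev, inv_inv]

lemma c_ne_zero : X.c ≠ 0 := by have := X.hc; omega

lemma pos_case (g : X.HG) (x : Multiplicative ℤ) (L' : List (ℤˣ × Multiplicative ℤ))
    (hL : (X.nf g).toList = ((1 : ℤˣ), x) :: L')
    (ih : ∀ g' : X.HG, (X.nf g').toList.length ≤ L'.length → (X.Ub g').Nonempty →
      ∃ s, s ∈ X.Ub g' ∧ X.Ub g' = {w | ∃ p ∈ X.Pst, w = s * p})
    (hne : (X.Ub g).Nonempty) :
    ∃ s, s ∈ X.Ub g ∧ X.Ub g = {w | ∃ p ∈ X.Pst, w = s * p} := by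
  classical
  set h := toAdd (X.nf g).head with hh
  obtain ⟨wt, hwt_head, hwt_toList, hwt_prod⟩ := X.split_word (X.nf g) 1 x L' hL
  set gt := wt.prod X.φ with hgt
  rw [show (((1 : ℤˣ) : ℤ)) = (1 : ℤ) from rfl, zpow_one] at hwt_prod
  have hgfact : g = HNNExtension.of (X.nf g).head * ((t : X.HG) * gt) := by
    conv_lhs => rw [← X.prod_nf g]
    rw [hwt_prod]
  -- the factorization lemma
  have hfactor : ∀ k : ℤ, X.c ∣ k - h → ∀ p : X.HG,
      g⁻¹ * (HNNExtension.of (ofAdd k) * ((t : X.HG) * p)) = (X.Gj gt h k)⁻¹ * p := by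
    intro k hk p
    have hcm : X.c * ((k - h) / X.c) = k - h := Int.mul_ediv_cancel' hk
    have hconj := X.conj_pow ((k - h) / X.c)
    rw [hcm] at hconj
    have e1 : (HNNExtension.of (X.nf g).head : X.HG)⁻¹ * HNNExtension.of (ofAdd k)
        = HNNExtension.of (ofAdd (k - h)) := by
      rw [← map_inv, ← map_mul]
      congr 1
      apply toAdd.injective
      simp only [toAdd_mul, toAdd_inv, toAdd_ofAdd, ← hh]
      omega
    rw [X.Gj_inv]
    calc g⁻¹ * (HNNExtension.of (ofAdd k) * ((t : X.HG) * p))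
        = gt⁻¹ * ((t⁻¹ * ((HNNExtension.of (X.nf g).head : X.HG)⁻¹ *
            HNNExtension.of (ofAdd k)) * t) * p) := by
          conv_lhs => rw [hgfact]
          group
      _ = gt⁻¹ * (HNNExtension.of (ofAdd (X.d * ((k - h) / X.c))) * p) := by
          rw [e1, hconj]
      _ = gt⁻¹ * HNNExtension.of (ofAdd (X.d * ((k - h) / X.c))) * p := by
          rw [mul_assoc]
  -- decomposition of elements of Ub g
  have hdec : ∀ z ∈ X.Ub g, ∃ p : X.HG,
      z = HNNExtension.of (ofAdd (toAdd (X.nf z).head)) * ((t : X.HG) * p) ∧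
      p ∈ X.Ub (X.Gj gt h (toAdd (X.nf z).head)) ∧
      X.c ∣ (toAdd (X.nf z).head - h) := by
    rintro z ⟨hz1, hz2⟩
    obtain ⟨hnil, hdvd⟩ := X.bkey_pos g z hz1 hz2 x L' hL
    cases hzl : (X.nf z).toList with
    | nil => exact absurd hzl hnil
    | cons a Lz =>
      cases a with
      | mk uz xz =>
        have huz : uz = 1 := X.nf_allP hz1 (uz, xz) (by rw [hzl]; simp)
        subst huz
        obtain ⟨wz, hwz_head, hwz_toList, hwz_prod⟩ := X.split_word (X.nf z) 1 xz Lz hzl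
        rw [show (((1 : ℤˣ) : ℤ)) = (1 : ℤ) from rfl, zpow_one] at hwz_prod
        set pz := wz.prod X.φ with hpz
        have hzfact : z = HNNExtension.of (ofAdd (toAdd (X.nf z).head)) * ((t : X.HG) * pz) := by
          conv_lhs => rw [← X.prod_nf z]
          rw [hwz_prod, ofAdd_toAdd]
        have hpzPst : pz ∈ X.Pst := by
          rw [X.mem_Pst_iff, hpz, X.nf_prod]
          constructor
          · rw [hwz_head]
            exact ((X.nf z).mem_set 1 xz (by rw [hzl]; simp)).1
          · intro p hp
            rw [hwz_toList] at hp
            exact X.nf_allP hz1 p (by rw [hzl]; exact List.mem_cons_of_mem _ hp)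
        refine ⟨pz, hzfact, ⟨hpzPst, ?_⟩, hdvd⟩
        have hfz := hfactor (toAdd (X.nf z).head) hdvd pz
        rw [← hzfact] at hfz
        rw [← hfz]
        exact hz2
  obtain ⟨z₀, hz₀⟩ := hne
  have hKne : ∃ k : ℤ, 0 ≤ k ∧ X.c ∣ k - h ∧ (X.Ub (X.Gj gt h k)).Nonempty := by
    obtain ⟨p, hfac, hp, hdvd⟩ := hdec z₀ hz₀
    exact ⟨toAdd (X.nf z₀).head, X.nf_head_nonneg hz₀.1, hdvd, ⟨p, hp⟩⟩
  obtain ⟨k₀, hk₀, hmin⟩ := Int.exists_least_of_bdd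
    (P := fun k => 0 ≤ k ∧ X.c ∣ k - h ∧ (X.Ub (X.Gj gt h k)).Nonempty)
    ⟨0, fun z hz => hz.1⟩ hKne
  have hlen' : (X.nf (X.Gj gt h k₀)).toList.length ≤ L'.length := by
    have e : X.nf (X.Gj gt h k₀)
        = (HNNExtension.of ((ofAdd (X.d * ((k₀ - h) / X.c)))⁻¹) : X.HG) • X.nf gt := by
      rw [Gj, ← map_inv, X.nf_mul_smul]
    rw [e, X.of_smul_toList, hgt, X.nf_prod, hwt_toList]
  obtain ⟨s', hs'Ub, hs'eq⟩ := ih (X.Gj gt h k₀) hlen' hk₀.2.2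
  set s : X.HG := HNNExtension.of (ofAdd k₀) * ((t : X.HG) * s') with hsdef
  have hsUb : s ∈ X.Ub g := by
    refine ⟨Submonoid.mul_mem _ (X.of_mem_Pst _ (by simpa using hk₀.1))
      (Submonoid.mul_mem _ X.t_mem_Pst hs'Ub.1), ?_⟩
    rw [hsdef, hfactor k₀ hk₀.2.1 s']
    exact hs'Ub.2
  refine ⟨s, hsUb, ?_⟩
  ext z
  constructor
  · intro hzUb
    obtain ⟨p, hfac, hpUb, hdvd⟩ := hdec z hzUb
    set k := toAdd (X.nf z).head with hk
    have hkK : k₀ ≤ k := hmin k ⟨X.nf_head_nonneg hzUb.1, hdvd, ⟨p, hpUb⟩⟩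
    have hdvd0 : X.c ∣ k - k₀ := by
      have := dvd_sub hdvd hk₀.2.1
      simpa using this
    set δ := (k - k₀) / X.c with hδdef
    have hcδ : X.c * δ = k - k₀ := Int.mul_ediv_cancel' hdvd0
    have hδ0 : 0 ≤ δ := Int.ediv_nonneg (by omega) (by have := X.hc; omega)
    have hconj := X.conj_pow δ
    rw [hcδ] at hconj
    have hszeq : s⁻¹ * z = s'⁻¹ * (HNNExtension.of (ofAdd (X.d * δ)) * p) := by
      rw [hsdef, hfac]
      have e1 : (HNNExtension.of (ofAdd k₀) : X.HG)⁻¹ * HNNExtension.of (ofAdd k)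
          = HNNExtension.of (ofAdd (k - k₀)) := by
        rw [← map_inv, ← map_mul]
        congr 1
        apply toAdd.injective
        simp only [toAdd_mul, toAdd_inv, toAdd_ofAdd]
        omega
      calc (HNNExtension.of (ofAdd k₀) * ((t : X.HG) * s'))⁻¹ *
            (HNNExtension.of (ofAdd k) * ((t : X.HG) * p))
          = s'⁻¹ * ((t⁻¹ * ((HNNExtension.of (ofAdd k₀) : X.HG)⁻¹ *
              HNNExtension.of (ofAdd k)) * t) * p) := by group
        _ = s'⁻¹ * (HNNExtension.of (ofAdd (X.d * δ)) * p) := by rw [e1, hconj]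
    have harith : X.d * ((k₀ - h) / X.c) + X.d * δ = X.d * ((k - h) / X.c) := by
      have h1 : X.c * ((k₀ - h) / X.c) = k₀ - h := Int.mul_ediv_cancel' hk₀.2.1
      have h2 : X.c * ((k - h) / X.c) = k - h := Int.mul_ediv_cancel' hdvd
      have e : (k₀ - h) / X.c + δ = (k - h) / X.c := by
        apply mul_left_cancel₀ X.c_ne_zero
        rw [mul_add, h1, hcδ, h2]
        omega
      rw [← mul_add, e]
    have hqUb : HNNExtension.of (ofAdd (X.d * δ)) * p ∈ X.Ub (X.Gj gt h k₀) := by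
      constructor
      · refine Submonoid.mul_mem _ (X.of_mem_Pst _ ?_) hpUb.1
        rw [toAdd_ofAdd]
        have := X.hd
        positivity
      · have e2 : (X.Gj gt h k₀)⁻¹ * (HNNExtension.of (ofAdd (X.d * δ)) * p)
            = (X.Gj gt h k)⁻¹ * p := by
          rw [X.Gj_inv, X.Gj_inv]
          rw [mul_assoc, ← mul_assoc (HNNExtension.of (ofAdd (X.d * ((k₀ - h) / X.c))) : X.HG),
            ← map_mul, ← ofAdd_add, harith, mul_assoc]
        rw [e2]
        exact hpUb.2
    rw [hs'eq] at hqUb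
    obtain ⟨p', hp', heq⟩ := hqUb
    refine ⟨s⁻¹ * z, ?_, by group⟩
    rw [hszeq, heq, inv_mul_cancel_left]
    exact hp'
  · rintro ⟨p, hp, rfl⟩
    exact X.Ub_mul_right hsUb hp

/-- The main structural theorem: every nonempty upper bound set is a principal
right translate of the positive cone. -/
theorem main : ∀ (n : ℕ) (g : X.HG), (X.nf g).toList.length ≤ n →
    (X.Ub g).Nonempty →
    ∃ s, s ∈ X.Ub g ∧ X.Ub g = {w | ∃ p ∈ X.Pst, w = s * p} := by
  intro n
  induction n with
  | zero =>
    intro g hlen _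
    exact X.base_case g (List.eq_nil_of_length_eq_zero (Nat.le_zero.1 hlen))
  | succ n ihn =>
    intro g hlen hne
    cases hL : (X.nf g).toList with
    | nil => exact X.base_case g hL
    | cons a L' =>
      cases a with
      | mk u xx =>
        rcases Int.units_eq_one_or u with rfl | rfl
        · refine X.pos_case g xx L' hL ?_ hne
          intro g' hlen' hne'
          refine ihn g' ?_ hne'
          have h2 := hlen
          rw [hL] at h2
          simp only [List.length_cons] at h2
          omega
        · obtain ⟨z₀, hz₀⟩ := hne
          exact X.neg_case g (X.bkey_neg g z₀ hz₀.1 hz₀.2 xx L' hL) ⟨z₀, hz₀⟩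

end Ctx
end Stmt12
namespace Stmt12
namespace Ctx

open HNNExtension HNNExtension.NormalWord Multiplicative Subgroup

variable (X : Ctx)

lemma triv (x : X.HG) (hx : x ∈ X.Pst) (hxinv : x⁻¹ ∈ X.Pst) : x = 1 := by
  cases hL : (X.nf x).toList with
  | cons a L =>
    cases a with
    | mk u y =>
      have hu : u = 1 := X.nf_allP hx (u, y) (by rw [hL]; simp)
      subst hu
      have h1 : x⁻¹ * (1 : X.HG) ∈ X.Pst := by rwa [mul_one]
      have := (X.bkey_pos x 1 (Submonoid.one_mem _) h1 y L hL).1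
      rw [X.nf_one] at this
      exact absurd rfl this
  | nil =>
    have hxeq : x = HNNExtension.of (X.nf x).head := by
      conv_lhs => rw [← X.prod_nf x]
      rw [X.nprod_eq]
      have : X.tprod (X.nf x).toList = 1 := by rw [hL]; rfl
      rw [this, mul_one]
    have h1 : 0 ≤ toAdd (X.nf x).head := X.nf_head_nonneg hx
    have h2 : 0 ≤ -(toAdd (X.nf x).head) := by
      have := X.nf_head_nonneg hxinv
      rw [hxeq, ← map_inv] at this
      rw [X.nf_of_head] at this
      simpa using this
    have h3 : (X.nf x).head = 1 := by
      apply toAdd.injective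
      simp only [toAdd_one]
      omega
    rw [hxeq, h3, map_one]

theorem qlo : (∀ x : X.HG, x ∈ X.Pst → x⁻¹ ∈ X.Pst → x = 1) ∧
    ∀ x y : X.HG, (∃ z ∈ X.Pst, x⁻¹ * z ∈ X.Pst ∧ y⁻¹ * z ∈ X.Pst) →
      ∃ w : X.HG, w ∈ X.Pst ∧ x⁻¹ * w ∈ X.Pst ∧ y⁻¹ * w ∈ X.Pst ∧
        ∀ z ∈ X.Pst, x⁻¹ * z ∈ X.Pst → y⁻¹ * z ∈ X.Pst → w⁻¹ * z ∈ X.Pst := by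
  constructor
  · exact X.triv
  · rintro x y ⟨z, hz, hxz, hyz⟩
    obtain ⟨sx, hsxUb, hsxeq⟩ := X.main (X.nf x).toList.length x le_rfl ⟨z, hz, hxz⟩
    obtain ⟨sy, hsyUb, hsyeq⟩ := X.main (X.nf y).toList.length y le_rfl ⟨z, hz, hyz⟩
    have hzx : z ∈ X.Ub x := ⟨hz, hxz⟩
    have hzy : z ∈ X.Ub y := ⟨hz, hyz⟩
    rw [hsxeq] at hzx
    rw [hsyeq] at hzy
    obtain ⟨q, hq, hzq⟩ := hzx
    obtain ⟨r, hr, hzr⟩ := hzy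
    have hvUb : sx⁻¹ * z ∈ X.Ub (sx⁻¹ * sy) := by
      constructor
      · rw [hzq, inv_mul_cancel_left]; exact hq
      · have e : (sx⁻¹ * sy)⁻¹ * (sx⁻¹ * z) = sy⁻¹ * z := by group
        rw [e, hzr, inv_mul_cancel_left]; exact hr
    obtain ⟨s', hs'Ub, hs'eq⟩ := X.main (X.nf (sx⁻¹ * sy)).toList.length _ le_rfl ⟨_, hvUb⟩
    refine ⟨sx * s', ?_, ?_, ?_, ?_⟩
    · exact Submonoid.mul_mem _ hsxUb.1 hs'Ub.1
    · rw [← mul_assoc]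
      exact Submonoid.mul_mem _ hsxUb.2 hs'Ub.1
    · have e : y⁻¹ * (sx * s') = (y⁻¹ * sy) * ((sx⁻¹ * sy)⁻¹ * s') := by group
      rw [e]
      exact Submonoid.mul_mem _ hsyUb.2 hs'Ub.2
    · intro z' hz' hxz' hyz'
      have hz'x : z' ∈ X.Ub x := ⟨hz', hxz'⟩
      have hz'y : z' ∈ X.Ub y := ⟨hz', hyz'⟩
      rw [hsxeq] at hz'x
      rw [hsyeq] at hz'y
      obtain ⟨q₀, hq₀, hzq₀⟩ := hz'x
      obtain ⟨r₀, hr₀, hzr₀⟩ := hz'y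
      have hq₀Ub : q₀ ∈ X.Ub (sx⁻¹ * sy) := by
        constructor
        · exact hq₀
        · have e : (sx⁻¹ * sy)⁻¹ * q₀ = sy⁻¹ * (sx * q₀) := by group
          rw [e, ← hzq₀, hzr₀, inv_mul_cancel_left]
          exact hr₀
      rw [hs'eq] at hq₀Ub
      obtain ⟨m, hm, hqm⟩ := hq₀Ub
      have e : (sx * s')⁻¹ * z' = s'⁻¹ * q₀ := by rw [hzq₀]; group
      rw [e, hqm, inv_mul_cancel_left]
      exact hm

end Ctx
end Stmt12

theorem stmt12 (c d : ℤ) (hc : 1 ≤ c) (hd : 1 ≤ d)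
    -- P is the copy of ℕ inside ℤ (written multiplicatively)
    (P : Submonoid (Multiplicative ℤ))
    (hP : ∀ x : Multiplicative ℤ, x ∈ P ↔ 0 ≤ Multiplicative.toAdd x)
    -- A = dℤ and B = cℤ
    (A B : Subgroup (Multiplicative ℤ))
    (hA : ∀ x : Multiplicative ℤ, x ∈ A ↔ ∃ m : ℤ, Multiplicative.toAdd x = d * m)
    (hB : ∀ x : Multiplicative ℤ, x ∈ B ↔ ∃ m : ℤ, Multiplicative.toAdd x = c * m)
    -- φ : A → B, φ(dm) = cm
    (φ : A ≃* B)
    (hφ : ∀ (x : A) (m : ℤ), Multiplicative.toAdd (x : Multiplicative ℤ) = d * m →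
      Multiplicative.toAdd ((φ x : B) : Multiplicative ℤ) = c * m) :
    QLO.IsQLO (Submonoid.closure
      ((HNNExtension.of '' (P : Set (Multiplicative ℤ))) ∪
        {HNNExtension.t (φ := φ)})) := by
  have h := Stmt12.Ctx.qlo ⟨c, d, hc, hd, P, hP, A, B, hA, hB, φ, hφ⟩
  exact ⟨h.1, fun x y hxy => by
    obtain ⟨w, hw1, hw2, hw3, hw4⟩ := h.2 x y (by
      obtain ⟨z, hz, hxz, hyz⟩ := hxy
      exact ⟨z, hz, hxz, hyz⟩)
    exact ⟨w, hw1, hw2, hw3, hw4⟩⟩
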